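/- Under the differentiated second Bianchi hypothesis stated in the context, whenever {a, Φa, b, Φb, c, Φc} is an orthonormal set in V, one has g(Φ'_c b − Φ'_b c, a) = 0. -/
import Mathlib


open RealInnerProductSpace

/-- One cyclic-summand of the differentiated second Bianchi identity for a
curvature tensor of conformally-complex-space-form type. -/
noncomputable def bianchiTerm {V : Type*} [NormedAddCommGroup V] [InnerProductSpace ℝ V]
    (c₁ c₂ l₁ : ℝ) (τ' : V →ₗ[ℝ] ℝ) (ρ' Φ' : V →ₗ[ℝ] V →ₗ[ℝ] V)
    (Φ : V →ₗ[ℝ] V) (x y z w : V) : V :=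
  (c₁ * τ' x) • (⟪z, w⟫ • y - ⟪y, w⟫ • z) +
    c₂ • (⟪ρ' x z, w⟫ • y - ⟪ρ' x y, w⟫ • z + ⟪z, w⟫ • ρ' x y - ⟪y, w⟫ • ρ' x z) +
    l₁ • (⟪Φ' x z, w⟫ • Φ y + ⟪Φ z, w⟫ • Φ' x y - ⟪Φ' x y, w⟫ • Φ z -
      ⟪Φ y, w⟫ • Φ' x z - (2 * ⟪Φ' x y, z⟫) • Φ w - (2 * ⟪Φ y, z⟫) • Φ' x w)

set_option maxHeartbeats 2000000 in
/-- Under the differentiated second Bianchi hypothesis, for any orthonormal set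
`{a, Φa, b, Φb, c, Φc}` one has `⟪Φ'_c b - Φ'_b c, a⟫ = 0`. -/
theorem stmt_12 {V : Type*} [NormedAddCommGroup V] [InnerProductSpace ℝ V]
    [FiniteDimensional ℝ V]
    (m : ℕ) (hm : Module.finrank ℝ V = m) (hm8 : 8 ≤ m)
    (Φ : V →ₗ[ℝ] V)
    (hskew : ∀ u v : V, ⟪Φ u, v⟫ = -⟪u, Φ v⟫)
    (hsq : ∀ v : V, Φ (Φ v) = -v)
    (l₁ : ℝ) (hl₁ : l₁ ≠ 0)
    (τ' : V →ₗ[ℝ] ℝ) (ρ' Φ' : V →ₗ[ℝ] V →ₗ[ℝ] V)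
    (hΦ'skew : ∀ x u v : V, ⟪Φ' x u, v⟫ = -⟪u, Φ' x v⟫)
    (hΦ'anti : ∀ x v : V, Φ' x (Φ v) = -Φ (Φ' x v))
    (hρ'sym : ∀ x u v : V, ⟪ρ' x u, v⟫ = ⟪u, ρ' x v⟫)
    (hB : ∀ x y z w : V,
      bianchiTerm (-1 / (((m : ℝ) - 1) * ((m : ℝ) - 2))) (1 / ((m : ℝ) - 2)) l₁ τ' ρ' Φ' Φ x y z w +
        bianchiTerm (-1 / (((m : ℝ) - 1) * ((m : ℝ) - 2))) (1 / ((m : ℝ) - 2)) l₁ τ' ρ' Φ' Φ y z x w +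
        bianchiTerm (-1 / (((m : ℝ) - 1) * ((m : ℝ) - 2))) (1 / ((m : ℝ) - 2)) l₁ τ' ρ' Φ' Φ z x y w = 0) :
    ∀ a b c : V, Orthonormal ℝ ![a, Φ a, b, Φ b, c, Φ c] →
      ⟪Φ' c b - Φ' b c, a⟫ = 0 := by
  intro a b c hon
  have honi := orthonormal_iff_ite.mp hon
  -- inner products among the six vectors
  have haa : ⟪a, a⟫ = 1 := by simpa using honi 0 0
  have hab : ⟪a, b⟫ = 0 := by simpa using honi 0 2
  have hac : ⟪a, c⟫ = 0 := by simpa using honi 0 4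
  have hba : ⟪b, a⟫ = 0 := by simpa using honi 2 0
  have hbb : ⟪b, b⟫ = 1 := by simpa using honi 2 2
  have hbc : ⟪b, c⟫ = 0 := by simpa using honi 2 4
  have hca : ⟪c, a⟫ = 0 := by simpa using honi 4 0
  have hcb : ⟪c, b⟫ = 0 := by simpa using honi 4 2
  have hcc : ⟪c, c⟫ = 1 := by simpa using honi 4 4
  have haPa : ⟪a, Φ a⟫ = 0 := by simpa using honi 0 1
  have haPb : ⟪a, Φ b⟫ = 0 := by simpa using honi 0 3
  have haPc : ⟪a, Φ c⟫ = 0 := by simpa using honi 0 5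
  have hbPa : ⟪b, Φ a⟫ = 0 := by simpa using honi 2 1
  have hbPb : ⟪b, Φ b⟫ = 0 := by simpa using honi 2 3
  have hbPc : ⟪b, Φ c⟫ = 0 := by simpa using honi 2 5
  have hcPa : ⟪c, Φ a⟫ = 0 := by simpa using honi 4 1
  have hcPb : ⟪c, Φ b⟫ = 0 := by simpa using honi 4 3
  have hcPc : ⟪c, Φ c⟫ = 0 := by simpa using honi 4 5
  -- construct a unit vector d orthogonal to all six
  set K : Submodule ℝ V := Submodule.span ℝ (Set.range ![a, Φ a, b, Φ b, c, Φ c]) with hK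
  have hKne : K ≠ ⊤ := by
    intro htop
    have h1 : Module.finrank ℝ K ≤ 6 := by
      simpa only [Set.finrank, Fintype.card_fin] using finrank_range_le_card (R := ℝ) ![a, Φ a, b, Φ b, c, Φ c]
    rw [htop, finrank_top, hm] at h1
    omega
  have hKbot : Kᗮ ≠ ⊥ := fun h => hKne (Submodule.orthogonal_eq_bot_iff.mp h)
  obtain ⟨d₀, hd₀K, hd₀⟩ := Submodule.ne_bot_iff _ |>.mp hKbot
  set d : V := ‖d₀‖⁻¹ • d₀ with hdp
  have hnorm : ‖d₀‖ ≠ 0 := norm_ne_zero_iff.mpr hd₀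
  have hdd : ⟪d, d⟫ = 1 := by
    rw [hdp, real_inner_smul_left, real_inner_smul_right, real_inner_self_eq_norm_mul_norm]
    field_simp
  have hdo : ∀ v ∈ K, ⟪v, d⟫ = 0 := by
    intro v hv
    rw [hdp, real_inner_smul_right, (Submodule.mem_orthogonal K d₀).mp hd₀K v hv, mul_zero]
  have hmem : ∀ i : Fin 6, ![a, Φ a, b, Φ b, c, Φ c] i ∈ K :=
    fun i => Submodule.subset_span (Set.mem_range_self i)
  have had : ⟪a, d⟫ = 0 := hdo a (hmem 0)
  have hPad : ⟪Φ a, d⟫ = 0 := hdo (Φ a) (hmem 1)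
  have hbd : ⟪b, d⟫ = 0 := hdo b (hmem 2)
  have hPbd : ⟪Φ b, d⟫ = 0 := hdo (Φ b) (hmem 3)
  have hcd : ⟪c, d⟫ = 0 := hdo c (hmem 4)
  have hPcd : ⟪Φ c, d⟫ = 0 := hdo (Φ c) (hmem 5)
  have hda : ⟪d, a⟫ = 0 := by rw [real_inner_comm]; exact had
  have hdb : ⟪d, b⟫ = 0 := by rw [real_inner_comm]; exact hbd
  have hdc : ⟪d, c⟫ = 0 := by rw [real_inner_comm]; exact hcd
  have hdPa : ⟪d, Φ a⟫ = 0 := by rw [real_inner_comm]; exact hPad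
  have hdPb : ⟪d, Φ b⟫ = 0 := by rw [real_inner_comm]; exact hPbd
  have hdPc : ⟪d, Φ c⟫ = 0 := by rw [real_inner_comm]; exact hPcd
  have haPd : ⟪a, Φ d⟫ = 0 := by have h := hskew a d; rw [hPad] at h; linarith
  have hbPd : ⟪b, Φ d⟫ = 0 := by have h := hskew b d; rw [hPbd] at h; linarith
  have hcPd : ⟪c, Φ d⟫ = 0 := by have h := hskew c d; rw [hPcd] at h; linarith
  have hdPd : ⟪d, Φ d⟫ = 0 := by
    have h := hskew d d
    have h2 : ⟪Φ d, d⟫ = ⟪d, Φ d⟫ := real_inner_comm _ _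
    linarith
  -- flip relation
  have hflip : ⟪Φ' c a, b⟫ = -⟪Φ' c b, a⟫ := by
    rw [hΦ'skew, real_inner_comm]
  -- the four instances of the Bianchi identity
  have h1 := congrArg (fun v : V => (⟪v, c⟫ : ℝ)) (hB a b (Φ b) b)
  have h2 := congrArg (fun v : V => (⟪v, Φ d⟫ : ℝ)) (hB a b c d)
  have h3 := congrArg (fun v : V => (⟪v, Φ d⟫ : ℝ)) (hB a b d c)
  have h4 := congrArg (fun v : V => (⟪v, d⟫ : ℝ)) (hB a (Φ b) d c)
  simp only [bianchiTerm, inner_add_left, inner_sub_left, inner_neg_left, inner_neg_right,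
    real_inner_smul_left, inner_zero_left, hsq, hΦ'anti, hskew,
    haa, hab, hac, hba, hbb, hbc, hca, hcb, hcc,
    haPa, haPb, haPc, hbPa, hbPb, hbPc, hcPa, hcPb, hcPc,
    hdd, had, hbd, hcd, hda, hdb, hdc, hdPa, hdPb, hdPc, haPd, hbPd, hcPd, hdPd,
    neg_neg, mul_neg, neg_mul, mul_zero, zero_mul, mul_one, one_mul,
    add_zero, zero_add, sub_zero, zero_sub, sub_self, neg_zero] at h1 h2 h3 h4
  have key : l₁ * (⟪Φ' c b, a⟫ - ⟪Φ' b c, a⟫) = 0 := by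
    linear_combination (-1/2 : ℝ) * h1 + (1/2 : ℝ) * h2 + (1/2 : ℝ) * h3 + (1/2 : ℝ) * h4 +
      l₁ * hflip
  rw [inner_sub_left]
  rcases mul_eq_zero.mp key with h | h
  · exact absurd h hl₁
  · exact h
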